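/- Let g be a simple Lie algebra with Chevalley generators, α ∈ Φ⁺, and s ∈ ℕ, r ∈ ℤ₊. Then in the universal enveloping algebra U(g[t]): (x_α ⊗ t)^{(s)} (y_α ⊗ 1)^{(r+s)} − (−1)^s ∑_{k≥0} y_α(r, s−k) P_α(u)_k lies in U(g[t]) n⁺[t], where P_α(u)_k is the coefficient of u^k in H_α(u) = exp(−∑_{r≥1} (h_α ⊗ t^r) u^r / r), X^{(p)} = X^p/p!, and y_α(r,s) = ∑ (y_α ⊗ 1)^{(b_0)}(y_α ⊗ t)^{(b_1)}⋯(y_α ⊗ t^s)^{(b_s)} over tuples (b_p) with ∑ b_p = r, ∑ p b_p = s. -/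

import Mathlib

set_option synthInstance.maxHeartbeats 1000000
set_option maxHeartbeats 1000000


open scoped TensorProduct
open Polynomial

noncomputable section

variable (L : Type) [LieRing L] [LieAlgebra ℂ L]

/-- The current algebra `L[t] = L ⊗ ℂ[t]` of a complex Lie algebra `L`. -/
abbrev Cur (L : Type) [LieRing L] [LieAlgebra ℂ L] : Type := (Polynomial ℂ) ⊗[ℂ] L

instance : LieAlgebra ℂ (Cur L) where
  lie_smul c x y := by
    rw [← algebraMap_smul (Polynomial ℂ) c y, ← algebraMap_smul (Polynomial ℂ) c ⁅x, y⁆]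
    exact @lie_smul (Polynomial ℂ) (Cur L) (Cur L) _ _ _ _ _ _ _
      ((algebraMap ℂ (Polynomial ℂ)) c) x y

/-- The universal enveloping algebra `U(L[t])`. -/
abbrev UC (L : Type) [LieRing L] [LieAlgebra ℂ L] : Type :=
  UniversalEnvelopingAlgebra ℂ (Cur L)

/-- `z ⊗ t^r` as an element of `U(L[t])`. -/
def el {L : Type} [LieRing L] [LieAlgebra ℂ L] (r : ℕ) (z : L) : UC L :=
  UniversalEnvelopingAlgebra.ι ℂ ((Polynomial.X ^ r : Polynomial ℂ) ⊗ₜ[ℂ] z)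

variable {L}

/-- Divided power `u^{(p)} = u^p/p!` in `U(L[t])`. -/
def dp (u : UC L) (p : ℕ) : UC L := ((p.factorial : ℂ)⁻¹) • u ^ p

/-- The Garland element
`y(r,s) = ∑ (y⊗1)^{(b₀)} (y⊗t)^{(b₁)} ⋯ (y⊗tˢ)^{(b_s)}`,
summed over tuples `(b_p)` with `∑ b_p = r`, `∑ p b_p = s`. -/
def yrs (y : L) (r s : ℕ) : UC L :=
  ∑ b ∈ Finset.univ.filter
      (fun b : Fin (s+1) → Fin (r+1) =>
        (∑ p, (b p : ℕ)) = r ∧ (∑ p, p.1 * (b p : ℕ)) = s),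
    (List.ofFn (fun p : Fin (s+1) => dp (el p.1 y) (b p))).prod

/-- `P(u)_k`, the coefficient of `u^k` in `exp(-∑_{r≥1} (h ⊗ t^r) u^r / r)`:
explicitly `∑ ∏_p ((-1/p)·(h⊗t^p))^{b_p} / b_p!` over multiplicities `(b_p)_{p≥1}`
with `∑ p·b_p = k`. -/
def Pk (h : L) (k : ℕ) : UC L :=
  ∑ b ∈ Finset.univ.filter
      (fun b : Fin k → Fin (k+1) => (∑ p, (p.1 + 1) * (b p : ℕ)) = k),
    (List.ofFn (fun p : Fin k =>
      dp ((-(((p.1 + 1 : ℕ) : ℂ))⁻¹) • el (p.1 + 1) h) (b p))).prod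



noncomputable section GarlandProof


open Finset Finsupp

variable {M : Type} [CommRing M] [Algebra ℂ M]

/-- divided power in a commutative ℂ-algebra -/
def dpM (z : M) (m : ℕ) : M := ((m.factorial : ℂ))⁻¹ • z ^ m

lemma dpM_zero (z : M) : dpM z 0 = 1 := by simp [dpM]

lemma fact_scalar (m : ℕ) : ((m+1 : ℕ) : ℂ) * (((m+1).factorial : ℂ))⁻¹ = ((m.factorial : ℂ))⁻¹ := by
  rw [Nat.factorial_succ, Nat.cast_mul, mul_inv, ← mul_assoc,
    mul_inv_cancel₀ (by exact_mod_cast Nat.succ_ne_zero m), one_mul]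

lemma dpM_succ (z : M) (m : ℕ) :
    z * dpM z m = ((m+1 : ℕ) : ℂ) • dpM z (m+1) := by
  unfold dpM
  rw [mul_smul_comm, smul_smul, pow_succ, ← mul_comm z (z ^ m), fact_scalar]

/-- the monomial `∏ f p ^ (c p) / (c p)!` -/
def TM (f : ℕ → M) (c : ℕ →₀ ℕ) : M := c.prod fun p m => dpM (f p) m

lemma TM_zero (f : ℕ → M) : TM f 0 = 1 := by simp [TM]

lemma TM_add_single (f : ℕ → M) (a : ℕ) (c : ℕ →₀ ℕ) :
    f a * TM f c = ((c a + 1 : ℕ) : ℂ) • TM f (c + Finsupp.single a 1) := by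
  classical
  set d : ℕ →₀ ℕ := c + Finsupp.single a 1 with hd
  set s : Finset ℕ := insert a c.support with hs
  have hsub : c.support ⊆ s := Finset.subset_insert _ _
  have hsub' : d.support ⊆ s := by
    refine Finset.Subset.trans Finsupp.support_add ?_
    apply Finset.union_subset hsub
    refine Finset.Subset.trans Finsupp.support_single_subset ?_
    simp [hs]
  have h1 : TM f c = ∏ p ∈ s, dpM (f p) (c p) :=
    Finsupp.prod_of_support_subset _ hsub _ (fun i _ => dpM_zero _)
  have h2 : TM f d = ∏ p ∈ s, dpM (f p) (d p) :=
    Finsupp.prod_of_support_subset _ hsub' _ (fun i _ => dpM_zero _)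
  have ha : a ∈ s := Finset.mem_insert_self _ _
  rw [h1, h2, ← Finset.mul_prod_erase s (fun p => dpM (f p) (c p)) ha,
    ← Finset.mul_prod_erase s (fun p => dpM (f p) (d p)) ha]
  have hagree : ∀ p ∈ s.erase a, dpM (f p) (d p) = dpM (f p) (c p) := by
    intro p hp
    have hne : p ≠ a := Finset.ne_of_mem_erase hp
    simp [hd, Finsupp.add_apply, Finsupp.single_apply, Ne.symm hne]
  rw [Finset.prod_congr rfl hagree]
  have hda : d a = c a + 1 := by simp [hd]
  rw [hda, ← mul_assoc, dpM_succ, smul_mul_assoc]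

/-- the key reindexing step -/
lemma master_step (f : ℕ → M) (a : ℕ) (S T : Finset (ℕ →₀ ℕ))
    (hST : ∀ c', c' ∈ T ↔ c' + Finsupp.single a 1 ∈ S) :
    ∑ c ∈ S, (c a) • TM f c = f a * ∑ c' ∈ T, TM f c' := by
  classical
  rw [Finset.mul_sum]
  have h2 : ∀ c' ∈ T, f a * TM f c' =
      (c' a + 1) • TM f (c' + Finsupp.single a 1) := by
    intro c' _
    rw [TM_add_single, ← Nat.cast_smul_eq_nsmul ℂ]
  rw [Finset.sum_congr rfl h2]
  rw [← Finset.sum_filter_of_ne (s := S) (f := fun c => (c a) • TM f c)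
    (p := fun c => c a ≠ 0) (by intro x _ hx; intro h; apply hx; show x a • TM f x = 0; rw [h, zero_smul])]
  refine Finset.sum_nbij' (fun c => c - Finsupp.single a 1) (fun c' => c' + Finsupp.single a 1)
    ?_ ?_ ?_ ?_ ?_
  · intro c hc
    simp only [Finset.mem_filter] at hc
    have hle : Finsupp.single a 1 ≤ c := by
      rw [Finsupp.single_le_iff]; omega
    rw [hST]
    rw [tsub_add_cancel_of_le hle]
    exact hc.1
  · intro c' hc'
    simp only [Finset.mem_filter]
    refine ⟨(hST c').1 hc', by simp⟩
  · intro c hc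
    simp only [Finset.mem_filter] at hc
    have hle : Finsupp.single a 1 ≤ c := by
      rw [Finsupp.single_le_iff]; omega
    exact tsub_add_cancel_of_le hle
  · intro c' _
    ext p
    simp [Finsupp.coe_tsub]
  · intro c hc
    simp only [Finset.mem_filter] at hc
    have hle : Finsupp.single a 1 ≤ c := by
      rw [Finsupp.single_le_iff]; omega
    have h3 : c - Finsupp.single a 1 + Finsupp.single a 1 = c := tsub_add_cancel_of_le hle
    rw [h3]
    have h4 : ((c - Finsupp.single a 1 : ℕ →₀ ℕ)) a = c a - 1 := by
      rw [Finsupp.tsub_apply]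
      simp
    rw [h4]
    congr 1
    omega

-- continuation: index sets
section Sets

open Finset Finsupp

/-- count of a multiplicity function -/
def cnt (c : ℕ →₀ ℕ) : ℕ := c.sum fun _ m => m

/-- weighted sum -/
def wsum (w : ℕ → ℕ) (c : ℕ →₀ ℕ) : ℕ := c.sum fun p m => w p * m

lemma le_cnt (c : ℕ →₀ ℕ) (p : ℕ) : c p ≤ cnt c := by
  by_cases h : c p = 0
  · omega
  · exact Finset.single_le_sum (f := fun q => c q) (fun i _ => Nat.zero_le _)
      (Finsupp.mem_support_iff.2 h)

lemma le_wsum (w : ℕ → ℕ) (c : ℕ →₀ ℕ) (p : ℕ) : w p * c p ≤ wsum w c := by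
  by_cases h : c p = 0
  · simp [h]
  · exact Finset.single_le_sum (f := fun q => w q * c q) (fun i _ => Nat.zero_le _)
      (Finsupp.mem_support_iff.2 h)

lemma cnt_add_single (c : ℕ →₀ ℕ) (a : ℕ) : cnt (c + Finsupp.single a 1) = cnt c + 1 := by
  unfold cnt
  rw [Finsupp.sum_add_index' (fun _ => rfl) (fun _ _ _ => rfl)]
  simp [Finsupp.sum_single_index]

lemma wsum_add_single (w : ℕ → ℕ) (c : ℕ →₀ ℕ) (a : ℕ) :
    wsum w (c + Finsupp.single a 1) = wsum w c + w a := by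
  unfold wsum
  rw [Finsupp.sum_add_index' (fun p => by simp) (fun p b₁ b₂ => by ring)]
  simp [Finsupp.sum_single_index]

lemma wsucc_add_single (c : ℕ →₀ ℕ) (a : ℕ) :
    wsum (· + 1) (c + Finsupp.single a 1) = wsum (· + 1) c + (a + 1) := wsum_add_single _ c a

/-- bound finsupp: value `m` on `[0,n)` -/
def bnd (n m : ℕ) : ℕ →₀ ℕ := ∑ p ∈ Finset.range n, Finsupp.single p m

lemma bnd_apply (n m p : ℕ) : bnd n m p = if p < n then m else 0 := by
  unfold bnd
  rw [Finset.sum_apply']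
  rw [Finset.sum_congr rfl (fun q _ => Finsupp.single_apply)]
  simp [Finset.sum_ite_eq (Finset.range n) p (fun _ => m), Finset.mem_range]

/-- index set for `yrs`: count `r`, weight `s` -/
def SY (r s : ℕ) : Finset (ℕ →₀ ℕ) :=
  (Finset.Iic (bnd (s+1) r)).filter fun c => cnt c = r ∧ wsum id c = s

lemma mem_SY {r s : ℕ} {c : ℕ →₀ ℕ} : c ∈ SY r s ↔ cnt c = r ∧ wsum id c = s := by
  unfold SY
  rw [Finset.mem_filter, Finset.mem_Iic]
  constructor
  · exact fun h => h.2
  · intro h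
    refine ⟨?_, h⟩
    rw [Finsupp.le_def]
    intro p
    rw [bnd_apply]
    by_cases hp : p < s + 1
    · simp only [hp, if_true]
      exact h.1 ▸ le_cnt c p
    · simp only [hp, if_false]
      by_contra hc
      have h1 : p * c p ≤ s := h.2 ▸ le_wsum id c p
      have : s + 1 ≤ p := by omega
      nlinarith [Nat.one_le_iff_ne_zero.2 (by omega : c p ≠ 0)]

lemma SY_support {r s : ℕ} {c : ℕ →₀ ℕ} (hc : c ∈ SY r s) : c.support ⊆ Finset.range (s+1) := by
  intro p hp
  rw [Finsupp.mem_support_iff] at hp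
  rw [Finset.mem_range]
  by_contra h
  have h1 : p * c p ≤ s := (mem_SY.1 hc).2 ▸ le_wsum id c p
  nlinarith [Nat.one_le_iff_ne_zero.2 hp, (by omega : s + 1 ≤ p)]

/-- index set for `Pk`: weight (with weights `p+1`) equal to `k` -/
def SP (k : ℕ) : Finset (ℕ →₀ ℕ) :=
  (Finset.Iic (bnd k k)).filter fun c => wsum (· + 1) c = k

lemma mem_SP {k : ℕ} {c : ℕ →₀ ℕ} : c ∈ SP k ↔ wsum (· + 1) c = k := by
  unfold SP
  rw [Finset.mem_filter, Finset.mem_Iic]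
  constructor
  · exact fun h => h.2
  · intro h
    refine ⟨?_, h⟩
    rw [Finsupp.le_def]
    intro p
    rw [bnd_apply]
    have h1 : (p+1) * c p ≤ k := h ▸ le_wsum (· + 1) c p
    by_cases hp : p < k
    · simp only [hp, if_true]; nlinarith
    · simp only [hp, if_false]
      by_contra hc
      nlinarith [Nat.one_le_iff_ne_zero.2 (by omega : c p ≠ 0)]

lemma SP_support {k : ℕ} {c : ℕ →₀ ℕ} (hc : c ∈ SP k) : c.support ⊆ Finset.range k := by
  intro p hp
  rw [Finsupp.mem_support_iff] at hp
  rw [Finset.mem_range]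
  by_contra h
  have h1 : (p+1) * c p ≤ k := (mem_SP.1 hc) ▸ le_wsum (· + 1) c p
  nlinarith [Nat.one_le_iff_ne_zero.2 hp, (by omega : k ≤ p)]

end Sets

section Masters

open Finset Finsupp

variable {M : Type} [CommRing M] [Algebra ℂ M]

lemma masterY (f : ℕ → M) (r s : ℕ) :
    ∑ pq ∈ Finset.HasAntidiagonal.antidiagonal s, f pq.1 * (∑ c ∈ SY r pq.2, TM f c)
      = (r+1) • ∑ c ∈ SY (r+1) s, TM f c := by
  classical
  have key : ∀ p ∈ Finset.range (s+1),
      f p * (∑ c ∈ SY r (s - p), TM f c) = ∑ c ∈ SY (r+1) s, (c p) • TM f c := by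
    intro p hp
    rw [Finset.mem_range] at hp
    rw [← master_step f p _ (SY r (s - p))]
    intro c'
    rw [mem_SY, mem_SY, cnt_add_single, wsum_add_single]
    simp only [id]
    omega
  rw [Finset.Nat.sum_antidiagonal_eq_sum_range_succ_mk]
  rw [Finset.sum_congr rfl (fun p hp => key p hp)]
  rw [Finset.sum_comm]
  rw [Finset.smul_sum]
  refine Finset.sum_congr rfl (fun c hc => ?_)
  rw [← Finset.sum_smul]
  congr 1
  have h1 : ∑ p ∈ Finset.range (s+1), c p = cnt c := by
    rw [cnt, Finsupp.sum_of_support_subset c (SY_support hc) _ (fun i _ => rfl)]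
  rw [h1, (mem_SY.1 hc).1]

lemma masterP (f : ℕ → M) (k : ℕ) :
    ∑ pq ∈ Finset.HasAntidiagonal.antidiagonal k, ((pq.1 + 1) • f pq.1) * (∑ c ∈ SP pq.2, TM f c)
      = (k+1) • ∑ c ∈ SP (k+1), TM f c := by
  classical
  have key : ∀ p ∈ Finset.range (k+1),
      f p * (∑ c ∈ SP (k - p), TM f c) = ∑ c ∈ SP (k+1), (c p) • TM f c := by
    intro p hp
    rw [Finset.mem_range] at hp
    rw [← master_step f p _ (SP (k - p))]
    intro c'
    rw [mem_SP, mem_SP, wsucc_add_single]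
    omega
  rw [Finset.Nat.sum_antidiagonal_eq_sum_range_succ_mk]
  have step1 : ∀ p ∈ Finset.range (k+1),
      ((p + 1) • f p) * (∑ c ∈ SP (k - p), TM f c)
        = ∑ c ∈ SP (k+1), ((p+1) * c p) • TM f c := by
    intro p hp
    rw [smul_mul_assoc, key p hp, Finset.smul_sum]
    refine Finset.sum_congr rfl (fun c _ => ?_)
    rw [smul_smul]
  rw [Finset.sum_congr rfl step1, Finset.sum_comm, Finset.smul_sum]
  refine Finset.sum_congr rfl (fun c hc => ?_)
  rw [← Finset.sum_smul]
  congr 1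
  have h1 : ∑ p ∈ Finset.range (k+1), (p+1) * c p = wsum (· + 1) c := by
    rw [wsum, Finsupp.sum_of_support_subset c (s := Finset.range (k+1))
      (Finset.Subset.trans (SP_support hc) (Finset.range_subset_range.2 (by omega))) _
      (fun i _ => by simp)]
  rw [h1, mem_SP.1 hc]

/-- singletons -/
lemma cnt_eq_zero {c : ℕ →₀ ℕ} (h : cnt c = 0) : c = 0 := by
  ext p
  have := le_cnt c p
  simp only [Finsupp.coe_zero, Pi.zero_apply]
  omega

lemma SY_zero_s {s : ℕ} (hs : s ≠ 0) : SY 0 s = ∅ := by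
  rw [Finset.eq_empty_iff_forall_notMem]
  intro c hc
  rw [mem_SY] at hc
  have h0 := cnt_eq_zero hc.1
  subst h0
  have : wsum id (0 : ℕ →₀ ℕ) = 0 := by simp [wsum]
  omega

lemma SY_zero_zero : SY 0 0 = {0} := by
  ext c
  rw [mem_SY, Finset.mem_singleton]
  constructor
  · intro h; exact cnt_eq_zero h.1
  · intro h; subst h; simp [cnt, wsum]

lemma SY_r_zero (r : ℕ) : SY r 0 = {Finsupp.single 0 r} := by
  ext c
  rw [mem_SY, Finset.mem_singleton]
  constructor
  · intro ⟨h1, h2⟩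
    have hsupp : ∀ p, p ≠ 0 → c p = 0 := by
      intro p hp
      have := le_wsum id c p
      rw [h2] at this
      simp only [id] at this
      by_contra hc
      nlinarith [Nat.one_le_iff_ne_zero.2 hc, Nat.one_le_iff_ne_zero.2 hp]
    ext p
    rw [Finsupp.single_apply]
    by_cases hp : p = 0
    · subst hp
      rw [if_pos rfl]
      rw [← h1, cnt, Finsupp.sum]
      rw [Finset.sum_eq_single 0]
      · intro b hb hb0
        exact hsupp b hb0
      · intro h; simp only [Finsupp.mem_support_iff, not_not] at h; exact h
    · rw [if_neg (fun h => hp h.symm)]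
      exact hsupp p hp
  · intro h; subst h
    constructor
    · simp [cnt, Finsupp.sum_single_index]
    · simp [wsum, Finsupp.sum_single_index]

lemma SP_zero : SP 0 = {0} := by
  ext c
  rw [mem_SP, Finset.mem_singleton]
  constructor
  · intro h
    ext p
    have := le_wsum (· + 1) c p
    rw [h] at this
    simp only [Finsupp.coe_zero, Pi.zero_apply]
    nlinarith
  · intro h; subst h; simp [wsum]

lemma TM_single (f : ℕ → M) (r : ℕ) : TM f (Finsupp.single 0 r) = dpM (f 0) r := by
  unfold TM
  exact Finsupp.prod_single_index (dpM_zero _)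

end Masters

section Bridge

open Finset Finsupp

variable {L : Type} [LieRing L] [LieAlgebra ℂ L]

lemma el_zero_elem (r : ℕ) : el r (0 : L) = 0 := by
  unfold el
  rw [TensorProduct.tmul_zero, map_zero]

lemma el_smul_elem (r : ℕ) (c : ℂ) (z : L) : el r (c • z) = c • el r z := by
  unfold el
  rw [TensorProduct.tmul_smul, map_smul]

lemma el_mul_el (a b : ℕ) (z w : L) :
    el a z * el b w = el b w * el a z + el (a+b) ⁅z, w⁆ := by
  have h : el (a+b) ⁅z, w⁆ = el a z * el b w - el b w * el a z := by
    unfold el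
    rw [pow_add]
    rw [← LieAlgebra.ExtendScalars.bracket_tmul ℂ (Polynomial ℂ) L L (Polynomial.X ^ a)
      (Polynomial.X ^ b) z w]
    letI := LieRing.ofAssociativeRing (A := UC L)
    rw [LieHom.map_lie]
    rw [Ring.lie_def]
  rw [h]; abel

lemma el_commute_self (a b : ℕ) (z : L) : Commute (el a z) (el b z) := by
  unfold Commute SemiconjBy
  rw [el_mul_el, lie_self, el_zero_elem, add_zero]

/-- function on `Fin n` to finsupp -/
def fofFn {n : ℕ} (b : Fin n → ℕ) : ℕ →₀ ℕ :=
  Finsupp.onFinset (Finset.range n) (fun p => if hp : p < n then b ⟨p, hp⟩ else 0)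
    (fun p hp => by
      rw [Finset.mem_range]
      by_contra h
      exact hp (dif_neg h))

lemma fofFn_support {n : ℕ} (b : Fin n → ℕ) : (fofFn b).support ⊆ Finset.range n :=
  Finsupp.support_onFinset_subset

lemma fofFn_apply {n : ℕ} (b : Fin n → ℕ) (p : Fin n) : fofFn b p.1 = b p := by
  show (if hp : p.1 < n then b ⟨p.1, hp⟩ else 0) = b p
  rw [dif_pos p.isLt]

lemma fofFn_apply_ge {n : ℕ} (b : Fin n → ℕ) {p : ℕ} (h : n ≤ p) : fofFn b p = 0 := by
  show (if hp : p < n then b ⟨p, hp⟩ else 0) = 0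
  rw [dif_neg (not_lt.2 h)]

lemma cnt_fofFn {n : ℕ} (b : Fin n → ℕ) : cnt (fofFn b) = ∑ p : Fin n, b p := by
  rw [cnt, Finsupp.sum_of_support_subset _ (fofFn_support b) _ (fun _ _ => rfl)]
  rw [← Fin.sum_univ_eq_sum_range (fun p => fofFn b p) n]
  exact Finset.sum_congr rfl (fun p _ => fofFn_apply b p)

lemma wsum_fofFn (w : ℕ → ℕ) {n : ℕ} (b : Fin n → ℕ) :
    wsum w (fofFn b) = ∑ p : Fin n, w p.1 * b p := by
  rw [wsum, Finsupp.sum_of_support_subset _ (fofFn_support b) _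
    (fun i _ => by simp)]
  rw [← Fin.sum_univ_eq_sum_range (fun p => w p * fofFn b p) n]
  exact Finset.sum_congr rfl (fun p _ => by rw [fofFn_apply b p])

lemma coe_TM {M : Type} [CommRing M] [Algebra ℂ M] (φ : M →ₐ[ℂ] UC L) (f : ℕ → M)
    {n : ℕ} (b : Fin n → ℕ) :
    φ (TM f (fofFn b)) = (List.ofFn fun p : Fin n => dp (φ (f p.1)) (b p)).prod := by
  rw [TM, Finsupp.prod_of_support_subset _ (fofFn_support b) _
    (fun i _ => dpM_zero _)]
  rw [← Fin.prod_univ_eq_prod_range (fun p => dpM (f p) (fofFn b p)) n]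
  have h1 : ∀ p : Fin n, dpM (f p.1) (fofFn b p.1) = dpM (f p.1) (b p) := by
    intro p; rw [fofFn_apply]
  rw [Finset.prod_congr rfl (fun p _ => h1 p), ← List.prod_ofFn, map_list_prod φ, List.map_ofFn]
  have hfun : (⇑φ ∘ fun p : Fin n => dpM (f p.1) (b p)) = fun p : Fin n => dp (φ (f p.1)) (b p) := by
    funext p
    show φ (dpM (f p.1) (b p)) = dp (φ (f p.1)) (b p)
    rw [dpM, dp, map_smul, map_pow]
  rw [hfun]

/-- the commutative subalgebra generated by the `el p y` -/
def Ysub (y : L) : Subalgebra ℂ (UC L) := Algebra.adjoin ℂ (Set.range fun p : ℕ => el p y)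

instance yCR (y : L) : CommRing (Ysub y) :=
  { (inferInstance : Ring (Ysub y)) with
    mul_comm := (Algebra.isMulCommutative_adjoin ℂ (by
    rintro a ⟨p, rfl⟩ b ⟨q, rfl⟩
    exact el_commute_self p q y)).is_comm.comm }

def fyd (y : L) (p : ℕ) : Ysub y := ⟨el p y, Algebra.subset_adjoin ⟨p, rfl⟩⟩

lemma yrs_eq (y : L) (r s : ℕ) :
    yrs y r s = ((Ysub y).val (∑ c ∈ SY r s, TM (fyd y) c) : UC L) := by
  rw [map_sum]
  unfold yrs
  refine Finset.sum_nbij' (fun b => fofFn (fun p => (b p : ℕ)))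
    (fun c => fun p : Fin (s+1) => (⟨min (c p.1) r, by omega⟩ : Fin (r+1))) ?_ ?_ ?_ ?_ ?_
  · intro b hb
    simp only [Finset.mem_filter, Finset.mem_univ, true_and] at hb
    rw [mem_SY, cnt_fofFn, wsum_fofFn]
    simpa using hb
  · intro c hc
    simp only [Finset.mem_filter, Finset.mem_univ, true_and]
    have hc' := mem_SY.1 hc
    have hb : ∀ p : Fin (s+1), min (c p.1) r = c p.1 := by
      intro p
      have := le_cnt c p.1
      omega
    constructor
    · have h3 : ∑ p : Fin (s+1), min (c p.1) r = ∑ p : Fin (s+1), c p.1 :=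
        Finset.sum_congr rfl (fun p _ => hb p)
      have h2 : cnt c = ∑ i ∈ Finset.range (s+1), c i :=
        Finsupp.sum_of_support_subset c (SY_support hc) (fun _ m => m) (fun _ _ => rfl)
      rw [h3, Fin.sum_univ_eq_sum_range (fun p => c p) (s+1), ← h2]
      exact hc'.1
    · have h3 : ∑ p : Fin (s+1), p.1 * min (c p.1) r = ∑ p : Fin (s+1), p.1 * c p.1 :=
        Finset.sum_congr rfl (fun p _ => by rw [hb p])
      have h2 : wsum id c = ∑ i ∈ Finset.range (s+1), i * c i := by
        rw [wsum, Finsupp.sum_of_support_subset c (SY_support hc) (fun p m => id p * m)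
          (fun _ _ => by simp)]
        simp [id]
      rw [h3, Fin.sum_univ_eq_sum_range (fun p => p * c p) (s+1), ← h2]
      exact hc'.2
  · intro b hb
    funext p
    apply Fin.ext
    show min (fofFn (fun p => (b p : ℕ)) p.1) r = b p
    rw [fofFn_apply]
    have := (b p).isLt
    omega
  · intro c hc
    ext p
    by_cases hp : p < s + 1
    · have : fofFn (fun q : Fin (s+1) => (min (c q.1) r : ℕ)) p
          = min (c (⟨p, hp⟩ : Fin (s+1)).1) r := fofFn_apply _ ⟨p, hp⟩
      rw [this]
      have := le_cnt c p
      rw [(mem_SY.1 hc).1] at this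
      simp only
      omega
    · rw [fofFn_apply_ge _ (by omega)]
      have : c p = 0 := by
        by_contra h
        have := SY_support hc (Finsupp.mem_support_iff.2 h)
        rw [Finset.mem_range] at this
        omega
      omega
  · intro b hb
    rw [coe_TM]
    rfl

/-- the commutative subalgebra generated by the `el (p+1) h` -/
def Hsub (h : L) : Subalgebra ℂ (UC L) := Algebra.adjoin ℂ (Set.range fun p : ℕ => el (p+1) h)

instance hCR (h : L) : CommRing (Hsub h) :=
  { (inferInstance : Ring (Hsub h)) with
    mul_comm := (Algebra.isMulCommutative_adjoin ℂ (by
    rintro a ⟨p, rfl⟩ b ⟨q, rfl⟩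
    exact el_commute_self (p+1) (q+1) h)).is_comm.comm }

def fhd (h : L) (p : ℕ) : Hsub h :=
  (-(((p + 1 : ℕ) : ℂ))⁻¹) • ⟨el (p+1) h, Algebra.subset_adjoin ⟨p, rfl⟩⟩

lemma Pk_eq (h : L) (k : ℕ) :
    Pk h k = ((Hsub h).val (∑ c ∈ SP k, TM (fhd h) c) : UC L) := by
  rw [map_sum]
  unfold Pk
  refine Finset.sum_nbij' (fun b => fofFn (fun p => (b p : ℕ)))
    (fun c => fun p : Fin k => (⟨min (c p.1) k, by omega⟩ : Fin (k+1))) ?_ ?_ ?_ ?_ ?_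
  · intro b hb
    simp only [Finset.mem_filter, Finset.mem_univ, true_and] at hb
    rw [mem_SP, wsum_fofFn]
    simpa using hb
  · intro c hc
    simp only [Finset.mem_filter, Finset.mem_univ, true_and]
    have hc' := mem_SP.1 hc
    have hb : ∀ p : Fin k, min (c p.1) k = c p.1 := by
      intro p
      have h4 := le_wsum (· + 1) c p.1
      rw [hc'] at h4
      have h5 : c p.1 ≤ k :=
        le_trans (Nat.le_mul_of_pos_left (c p.1) (Nat.succ_pos p.1)) h4
      omega
    have h3 : ∑ p : Fin k, (p.1 + 1) * min (c p.1) k = ∑ p : Fin k, (p.1 + 1) * c p.1 :=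
      Finset.sum_congr rfl (fun p _ => by rw [hb p])
    have h2 : wsum (· + 1) c = ∑ i ∈ Finset.range k, (i+1) * c i := by
      rw [wsum, Finsupp.sum_of_support_subset c (SP_support hc) (fun p m => (p+1) * m)
        (fun _ _ => by simp)]
    rw [h3, Fin.sum_univ_eq_sum_range (fun p => (p+1) * c p) k, ← h2]
    exact hc'
  · intro b hb
    funext p
    apply Fin.ext
    show min (fofFn (fun p => (b p : ℕ)) p.1) k = b p
    rw [fofFn_apply]
    have := (b p).isLt
    omega
  · intro c hc
    ext p
    by_cases hp : p < k
    · have : fofFn (fun q : Fin k => (min (c q.1) k : ℕ)) p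
          = min (c (⟨p, hp⟩ : Fin k).1) k := fofFn_apply _ ⟨p, hp⟩
      rw [this]
      have h2 := le_wsum (· + 1) c p
      rw [mem_SP.1 hc] at h2
      have h5 : c p ≤ k := le_trans (Nat.le_mul_of_pos_left (c p) (Nat.succ_pos p)) h2
      simp only
      omega
    · rw [fofFn_apply_ge _ (by omega)]
      have : c p = 0 := by
        by_contra hcc
        have := SP_support hc (Finsupp.mem_support_iff.2 hcc)
        rw [Finset.mem_range] at this
        omega
      omega
  · intro b hb
    rw [coe_TM]
    rfl

end Bridge

section Recursions

open Finset

variable {L : Type} [LieRing L] [LieAlgebra ℂ L]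

lemma yrs_rec (y : L) (r s : ℕ) :
    ∑ pq ∈ Finset.HasAntidiagonal.antidiagonal s, el pq.1 y * yrs y r pq.2
      = ((r+1 : ℕ) : ℂ) • yrs y (r+1) s := by
  have hm := masterY (fyd y) r s
  have happ := congrArg ((Ysub y).val) hm
  rw [map_nsmul, map_sum] at happ
  rw [← Nat.cast_smul_eq_nsmul ℂ] at happ
  rw [yrs_eq y (r+1) s, ← happ]
  refine Finset.sum_congr rfl fun pq _ => ?_
  rw [map_mul, yrs_eq y r pq.2]
  rfl

lemma yrs_zero_zero (y : L) : yrs y 0 0 = 1 := by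
  rw [yrs_eq, SY_zero_zero, Finset.sum_singleton, TM_zero, map_one]

lemma yrs_zero_ne (y : L) {s : ℕ} (hs : s ≠ 0) : yrs y 0 s = 0 := by
  rw [yrs_eq, SY_zero_s hs, Finset.sum_empty, map_zero]

lemma yrs_r_zero (y : L) (r : ℕ) : yrs y r 0 = dp (el 0 y) r := by
  rw [yrs_eq, SY_r_zero, Finset.sum_singleton, TM_single]
  show (Ysub y).val (((r.factorial : ℂ))⁻¹ • (fyd y 0) ^ r) = _
  rw [map_smul, map_pow, dp]
  rfl

lemma yrs_commute (y : L) (a r s : ℕ) : Commute (el a y) (yrs y r s) := by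
  rw [yrs_eq]
  show Commute ((Ysub y).val (fyd y a)) _
  unfold Commute SemiconjBy
  rw [← map_mul, ← map_mul, mul_comm]

lemma Pk_rec (h : L) (k : ℕ) :
    ∑ pq ∈ Finset.HasAntidiagonal.antidiagonal k, el (pq.1+1) h * Pk h pq.2
      = -(((k+1 : ℕ) : ℂ) • Pk h (k+1)) := by
  have hm := masterP (fhd h) k
  have happ := congrArg ((Hsub h).val) hm
  rw [map_nsmul, map_sum] at happ
  rw [← Nat.cast_smul_eq_nsmul ℂ, ← Pk_eq h (k+1)] at happ
  have hterm : ∀ pq : ℕ × ℕ, pq ∈ Finset.HasAntidiagonal.antidiagonal k →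
      (Hsub h).val ((pq.1 + 1) • fhd h pq.1 * ∑ c ∈ SP pq.2, TM (fhd h) c)
        = -(el (pq.1+1) h * Pk h pq.2) := by
    intro pq _
    rw [map_mul, ← Pk_eq h pq.2]
    have hv : (Hsub h).val ((pq.1 + 1) • fhd h pq.1) = -(el (pq.1+1) h) := by
      rw [map_nsmul, ← Nat.cast_smul_eq_nsmul ℂ]
      show ((pq.1 + 1 : ℕ) : ℂ) • ((Hsub h).val ((-(((pq.1 + 1 : ℕ) : ℂ))⁻¹) •
        ⟨el (pq.1+1) h, Algebra.subset_adjoin ⟨pq.1, rfl⟩⟩)) = _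
      rw [map_smul, smul_smul]
      show (((pq.1 + 1 : ℕ) : ℂ) * (-(((pq.1 + 1 : ℕ) : ℂ))⁻¹)) • el (pq.1+1) h = _
      rw [mul_neg, mul_inv_cancel₀ (by exact_mod_cast Nat.succ_ne_zero pq.1)]
      rw [neg_smul, one_smul]
    rw [hv, neg_mul]
  rw [Finset.sum_congr rfl hterm] at happ
  rw [Finset.sum_neg_distrib] at happ
  rw [← happ, neg_neg]

lemma Pk_zero (h : L) : Pk h 0 = 1 := by
  rw [Pk_eq, SP_zero, Finset.sum_singleton, TM_zero, map_one]

lemma Pk_mem (h : L) (k : ℕ) : Pk h k ∈ Hsub h := by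
  rw [Pk_eq]
  exact SetLike.coe_mem _

end Recursions

section SeriesInfra

open PowerSeries Finset

variable {L : Type} [LieRing L] [LieAlgebra ℂ L]

/-- formal derivative -/
def Dser (F : PowerSeries (UC L)) : PowerSeries (UC L) :=
  PowerSeries.mk fun n => (n+1 : ℕ) • PowerSeries.coeff (n+1) F

lemma coeff_Dser (F : PowerSeries (UC L)) (n : ℕ) :
    coeff n (Dser F) = (n+1 : ℕ) • coeff (n+1) F := coeff_mk _ _

lemma Dser_one : Dser (1 : PowerSeries (UC L)) = 0 := by
  ext n
  rw [coeff_Dser, PowerSeries.coeff_one, map_zero]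
  simp

lemma Dser_smul (c : ℂ) (F : PowerSeries (UC L)) : Dser (c • F) = c • Dser F := by
  ext n
  rw [coeff_Dser, PowerSeries.coeff_smul, PowerSeries.coeff_smul, coeff_Dser, smul_comm]

lemma sum_antidiagonal_swap' {β : Type} [AddCommMonoid β] (n : ℕ) (f : ℕ → ℕ → β) :
    ∑ pq ∈ Finset.HasAntidiagonal.antidiagonal n, f pq.1 pq.2 = ∑ pq ∈ Finset.HasAntidiagonal.antidiagonal n, f pq.2 pq.1 := by
  refine Finset.sum_nbij' (fun pq => (pq.2, pq.1)) (fun pq => (pq.2, pq.1)) ?_ ?_ ?_ ?_ ?_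
  · intro pq hpq
    rw [Finset.HasAntidiagonal.mem_antidiagonal] at hpq
    simp only [Finset.HasAntidiagonal.mem_antidiagonal]
    omega
  · intro pq hpq
    rw [Finset.HasAntidiagonal.mem_antidiagonal] at hpq
    simp only [Finset.HasAntidiagonal.mem_antidiagonal]
    omega
  · intro pq _; simp
  · intro pq _; simp
  · intro pq _; rfl

lemma Dser_mul (F G : PowerSeries (UC L)) :
    Dser (F * G) = Dser F * G + F * Dser G := by
  ext n
  rw [map_add, coeff_Dser, PowerSeries.coeff_mul, PowerSeries.coeff_mul, PowerSeries.coeff_mul, Finset.smul_sum]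
  have hsplit : ∀ pq ∈ Finset.HasAntidiagonal.antidiagonal (n+1),
      (n+1 : ℕ) • (coeff pq.1 F * coeff pq.2 G)
        = pq.1 • (coeff pq.1 F * coeff pq.2 G)
          + pq.2 • (coeff pq.1 F * coeff pq.2 G) := by
    intro pq hpq
    rw [Finset.HasAntidiagonal.mem_antidiagonal] at hpq
    rw [← add_nsmul, hpq]
  rw [Finset.sum_congr rfl hsplit, Finset.sum_add_distrib]
  congr 1
  · rw [Finset.Nat.antidiagonal_succ, Finset.sum_cons, zero_smul, zero_add, Finset.sum_map]
    refine Finset.sum_congr rfl fun pq _ => ?_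
    simp only [Function.Embedding.coe_prodMap, Function.Embedding.coeFn_mk,
      Function.Embedding.refl_apply, Prod.map_fst, Prod.map_snd, Nat.succ_eq_add_one]
    rw [coeff_Dser, smul_mul_assoc]
  · rw [Finset.Nat.antidiagonal_succ', Finset.sum_cons, zero_smul, zero_add, Finset.sum_map]
    refine Finset.sum_congr rfl fun pq _ => ?_
    simp only [Function.Embedding.coe_prodMap, Function.Embedding.coeFn_mk,
      Function.Embedding.refl_apply, Prod.map_fst, Prod.map_snd, Nat.succ_eq_add_one]
    rw [coeff_Dser, mul_smul_comm]

lemma series_commute (F G : PowerSeries (UC L))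
    (hc : ∀ m n : ℕ, Commute (coeff m F) (coeff n G)) : Commute F G := by
  unfold Commute SemiconjBy
  ext n
  rw [PowerSeries.coeff_mul, PowerSeries.coeff_mul,
    sum_antidiagonal_swap' n (fun a b => coeff a F * coeff b G)]
  exact Finset.sum_congr rfl fun pq _ => (hc pq.2 pq.1).eq

lemma csmul_cancel {c : ℂ} (hc : c ≠ 0) {F G : PowerSeries (UC L)} (h : c • F = c • G) :
    F = G := smul_right_injective _ hc h

end SeriesInfra

section SL2Series

open PowerSeries Finset

variable {L : Type} [LieRing L] [LieAlgebra ℂ L]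

def Yser (y : L) : PowerSeries (UC L) := PowerSeries.mk fun p => el p y
def Hser (h : L) : PowerSeries (UC L) := PowerSeries.mk fun p => el (p+1) h
def PserS (h : L) : PowerSeries (UC L) := PowerSeries.mk fun k => Pk h k
def Yd (y : L) (r : ℕ) : PowerSeries (UC L) := PowerSeries.mk fun s => yrs y r s
def Cx (x : L) : PowerSeries (UC L) := PowerSeries.C (el 1 x)

lemma Yd_zero (y : L) : Yd y 0 = 1 := by
  ext n
  rw [Yd, coeff_mk, PowerSeries.coeff_one]
  rcases n with _ | n
  · rw [yrs_zero_zero, if_pos rfl]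
  · rw [yrs_zero_ne y (Nat.succ_ne_zero n), if_neg (Nat.succ_ne_zero n)]

lemma Yser_Yd (y : L) (r : ℕ) : Yser y * Yd y r = ((r+1 : ℕ) : ℂ) • Yd y (r+1) := by
  ext n
  rw [PowerSeries.coeff_mul, PowerSeries.coeff_smul]
  simp only [Yser, Yd, coeff_mk]
  exact yrs_rec y r n

lemma Yd_one (y : L) : Yd y 1 = Yser y := by
  have h := Yser_Yd y 0
  rw [Yd_zero, mul_one, Nat.cast_one, one_smul] at h
  rw [h]

lemma Hser_PserS (h : L) : Hser h * PserS h = -(Dser (PserS h)) := by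
  ext k
  rw [PowerSeries.coeff_mul, map_neg, coeff_Dser]
  simp only [Hser, PserS, coeff_mk]
  rw [← Nat.cast_smul_eq_nsmul ℂ]
  exact Pk_rec h k

lemma Yd_commute_DY (y : L) (r : ℕ) : Commute (Yd y r) (Dser (Yser y)) := by
  refine series_commute _ _ ?_
  intro m n
  simp only [Yd, Yser, coeff_Dser, coeff_mk]
  rw [← Nat.cast_smul_eq_nsmul ℂ]
  exact (((yrs_commute y (n+1) r m).symm).smul_right _)

variable (x y h : L)

lemma Hser_Yser (hhy : ⁅h, y⁆ = (-2 : ℂ) • y) :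
    Hser h * Yser y - Yser y * Hser h = (-2:ℂ) • Dser (Yser y) := by
  ext n
  rw [map_sub, PowerSeries.coeff_mul, PowerSeries.coeff_mul, PowerSeries.coeff_smul, coeff_Dser]
  simp only [Hser, Yser, coeff_mk]
  have h1 : ∀ pq ∈ Finset.HasAntidiagonal.antidiagonal n, el (pq.1+1) h * el pq.2 y
      = el pq.2 y * el (pq.1+1) h + (-2:ℂ) • el (n+1) y := by
    intro pq hpq
    rw [Finset.HasAntidiagonal.mem_antidiagonal] at hpq
    rw [el_mul_el, hhy, el_smul_elem]
    have he : pq.1 + 1 + pq.2 = n + 1 := by omega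
    rw [he]
  rw [Finset.sum_congr rfl h1, Finset.sum_add_distrib, Finset.sum_const,
    Finset.Nat.card_antidiagonal,
    sum_antidiagonal_swap' n (fun a b => el b y * el (a+1) h)]
  rw [add_sub_cancel_left, ← Nat.cast_smul_eq_nsmul ℂ (n+1) ((-2:ℂ) • el (n+1) y),
    ← Nat.cast_smul_eq_nsmul ℂ (n+1) (el (n+1) y)]
  module

lemma Cx_Yser (hxy : ⁅x, y⁆ = h) :
    Cx x * Yser y - Yser y * Cx x = Hser h := by
  ext n
  rw [map_sub, Cx, PowerSeries.coeff_C_mul, PowerSeries.coeff_mul_C]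
  simp only [Yser, Hser, coeff_mk]
  rw [el_mul_el, hxy, add_sub_cancel_left]
  have he : 1 + n = n + 1 := by omega
  rw [he]

lemma Hser_Yd (hhy : ⁅h, y⁆ = (-2 : ℂ) • y) :
    ∀ r : ℕ, Hser h * Yd y (r+1) - Yd y (r+1) * Hser h
      = (-2:ℂ) • (Yd y r * Dser (Yser y)) := by
  intro r
  induction r with
  | zero =>
      rw [Yd_one, Yd_zero, one_mul]
      exact Hser_Yser y h hhy
  | succ r ih =>
      apply csmul_cancel (c := ((r+2 : ℕ) : ℂ)) (by exact_mod_cast Nat.succ_ne_zero (r+1))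
      have hYY : Yser y * Yd y (r+1) = ((r+2 : ℕ) : ℂ) • Yd y (r+2) := Yser_Yd y (r+1)
      have hAY : Hser h * Yser y = Yser y * Hser h + (-2:ℂ) • Dser (Yser y) := by
        rw [← Hser_Yser y h hhy]; abel
      have hAY1 : Hser h * Yd y (r+1)
          = Yd y (r+1) * Hser h + (-2:ℂ) • (Yd y r * Dser (Yser y)) := by
        rw [← ih]; abel
      have hYY0 : Yser y * Yd y r = ((r+1 : ℕ) : ℂ) • Yd y (r+1) := Yser_Yd y r
      have hD : Dser (Yser y) * Yd y (r+1) = Yd y (r+1) * Dser (Yser y) :=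
        (Yd_commute_DY y (r+1)).symm.eq
      have hcast : ((r+2 : ℕ) : ℂ) = ((r+1 : ℕ) : ℂ) + 1 := by push_cast; ring
      calc ((r+2 : ℕ) : ℂ) • (Hser h * Yd y (r+2) - Yd y (r+2) * Hser h)
          = Hser h * (((r+2 : ℕ) : ℂ) • Yd y (r+2))
              - (((r+2 : ℕ) : ℂ) • Yd y (r+2)) * Hser h := by
            rw [smul_sub, mul_smul_comm, smul_mul_assoc]
        _ = Hser h * (Yser y * Yd y (r+1)) - (Yser y * Yd y (r+1)) * Hser h := by rw [hYY]
        _ = (Hser h * Yser y) * Yd y (r+1) - Yser y * (Yd y (r+1) * Hser h) := by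
            rw [mul_assoc, mul_assoc]
        _ = (Yser y * Hser h + (-2:ℂ) • Dser (Yser y)) * Yd y (r+1)
              - Yser y * (Yd y (r+1) * Hser h) := by rw [hAY]
        _ = Yser y * (Hser h * Yd y (r+1)) + (-2:ℂ) • (Dser (Yser y) * Yd y (r+1))
              - Yser y * (Yd y (r+1) * Hser h) := by
            rw [add_mul, smul_mul_assoc, mul_assoc]
        _ = Yser y * (Yd y (r+1) * Hser h) + (-2:ℂ) • (Yser y * (Yd y r * Dser (Yser y)))
              + (-2:ℂ) • (Yd y (r+1) * Dser (Yser y))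
              - Yser y * (Yd y (r+1) * Hser h) := by
            rw [hAY1, mul_add, mul_smul_comm, hD]
            try abel
        _ = (-2:ℂ) • (Yser y * (Yd y r * Dser (Yser y)))
              + (-2:ℂ) • (Yd y (r+1) * Dser (Yser y)) := by abel
        _ = (-2:ℂ) • (((r+1 : ℕ) : ℂ) • (Yd y (r+1) * Dser (Yser y)))
              + (-2:ℂ) • (Yd y (r+1) * Dser (Yser y)) := by
            rw [← mul_assoc, hYY0, smul_mul_assoc]
        _ = ((r+2 : ℕ) : ℂ) • ((-2:ℂ) • (Yd y (r+1) * Dser (Yser y))) := by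
            push_cast
            module

lemma Dser_Yd (y : L) : ∀ r : ℕ, Dser (Yd y (r+1)) = Yd y r * Dser (Yser y) := by
  intro r
  induction r with
  | zero => rw [Yd_one, Yd_zero, one_mul]
  | succ r ih =>
      apply csmul_cancel (c := ((r+2 : ℕ) : ℂ)) (by exact_mod_cast Nat.succ_ne_zero (r+1))
      have hYY : Yser y * Yd y (r+1) = ((r+2 : ℕ) : ℂ) • Yd y (r+2) := Yser_Yd y (r+1)
      have hYY0 : Yser y * Yd y r = ((r+1 : ℕ) : ℂ) • Yd y (r+1) := Yser_Yd y r
      have hD : Dser (Yser y) * Yd y (r+1) = Yd y (r+1) * Dser (Yser y) :=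
        (Yd_commute_DY y (r+1)).symm.eq
      have hcast : ((r+2 : ℕ) : ℂ) = ((r+1 : ℕ) : ℂ) + 1 := by push_cast; ring
      calc ((r+2 : ℕ) : ℂ) • Dser (Yd y (r+2))
          = Dser (((r+2 : ℕ) : ℂ) • Yd y (r+2)) := by rw [Dser_smul]
        _ = Dser (Yser y * Yd y (r+1)) := by rw [hYY]
        _ = Dser (Yser y) * Yd y (r+1) + Yser y * Dser (Yd y (r+1)) := Dser_mul _ _
        _ = Yd y (r+1) * Dser (Yser y) + Yser y * (Yd y r * Dser (Yser y)) := by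
            rw [hD, ih]
        _ = Yd y (r+1) * Dser (Yser y)
              + ((r+1 : ℕ) : ℂ) • (Yd y (r+1) * Dser (Yser y)) := by
            rw [← mul_assoc, hYY0, smul_mul_assoc]
        _ = ((r+2 : ℕ) : ℂ) • (Yd y (r+1) * Dser (Yser y)) := by
            push_cast
            module

lemma Yser_Dser_Yd (y : L) (r : ℕ) :
    Yser y * Dser (Yd y r) = ((r : ℕ) : ℂ) • (Yd y r * Dser (Yser y)) := by
  cases r with
  | zero =>
      rw [Yd_zero, Dser_one, mul_zero, Nat.cast_zero, zero_smul]
  | succ r =>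
      rw [Dser_Yd y r, ← mul_assoc, Yser_Yd y r, smul_mul_assoc]

lemma Cx_Yd (hxy : ⁅x, y⁆ = h) (hhy : ⁅h, y⁆ = (-2 : ℂ) • y) :
    ∀ r : ℕ, Cx x * Yd y (r+1) - Yd y (r+1) * Cx x
      = Yd y r * Hser h - Dser (Yd y r) := by
  intro r
  induction r with
  | zero =>
      rw [Yd_one, Yd_zero, one_mul, Dser_one, sub_zero]
      exact Cx_Yser x y h hxy
  | succ r ih =>
      apply csmul_cancel (c := ((r+2 : ℕ) : ℂ)) (by exact_mod_cast Nat.succ_ne_zero (r+1))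
      have hYY : Yser y * Yd y (r+1) = ((r+2 : ℕ) : ℂ) • Yd y (r+2) := Yser_Yd y (r+1)
      have hYY0 : Yser y * Yd y r = ((r+1 : ℕ) : ℂ) • Yd y (r+1) := Yser_Yd y r
      have hCY : Cx x * Yser y = Yser y * Cx x + Hser h := by
        rw [← Cx_Yser x y h hxy]; abel
      have hCY1 : Cx x * Yd y (r+1)
          = Yd y (r+1) * Cx x + (Yd y r * Hser h - Dser (Yd y r)) := by
        rw [← ih]; abel
      have hHY1 : Hser h * Yd y (r+1)
          = Yd y (r+1) * Hser h + (-2:ℂ) • (Yd y r * Dser (Yser y)) := by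
        rw [← Hser_Yd y h hhy r]; abel
      have hYD : Yser y * Dser (Yd y r) = ((r : ℕ) : ℂ) • (Yd y r * Dser (Yser y)) :=
        Yser_Dser_Yd y r
      have hDNew : Dser (Yd y (r+1)) = Yd y r * Dser (Yser y) := Dser_Yd y r
      calc ((r+2 : ℕ) : ℂ) • (Cx x * Yd y (r+2) - Yd y (r+2) * Cx x)
          = Cx x * (Yser y * Yd y (r+1)) - (Yser y * Yd y (r+1)) * Cx x := by
            rw [hYY, smul_sub, mul_smul_comm, smul_mul_assoc]
        _ = (Cx x * Yser y) * Yd y (r+1) - Yser y * (Yd y (r+1) * Cx x) := by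
            rw [mul_assoc, mul_assoc]
        _ = (Yser y * Cx x + Hser h) * Yd y (r+1) - Yser y * (Yd y (r+1) * Cx x) := by
            rw [hCY]
        _ = Yser y * (Cx x * Yd y (r+1)) + Hser h * Yd y (r+1)
              - Yser y * (Yd y (r+1) * Cx x) := by
            rw [add_mul, mul_assoc]
        _ = Yser y * (Yd y (r+1) * Cx x) + Yser y * (Yd y r * Hser h)
              - Yser y * Dser (Yd y r)
              + (Yd y (r+1) * Hser h + (-2:ℂ) • (Yd y r * Dser (Yser y)))
              - Yser y * (Yd y (r+1) * Cx x) := by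
            rw [hCY1, hHY1, mul_add, mul_sub]
            abel
        _ = Yser y * (Yd y r * Hser h) - Yser y * Dser (Yd y r)
              + Yd y (r+1) * Hser h + (-2:ℂ) • (Yd y r * Dser (Yser y)) := by abel
        _ = ((r+1 : ℕ) : ℂ) • (Yd y (r+1) * Hser h)
              - ((r : ℕ) : ℂ) • (Yd y r * Dser (Yser y))
              + Yd y (r+1) * Hser h + (-2:ℂ) • (Yd y r * Dser (Yser y)) := by
            rw [← mul_assoc, hYY0, smul_mul_assoc, hYD]
        _ = ((r+2 : ℕ) : ℂ) • (Yd y (r+1) * Hser h)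
              - ((r+2 : ℕ) : ℂ) • (Yd y r * Dser (Yser y)) := by
            push_cast
            module
        _ = ((r+2 : ℕ) : ℂ) • (Yd y (r+1) * Hser h - Dser (Yd y (r+1))) := by
            rw [hDNew, smul_sub]

/-- Lemma A : `[Cx, Yd (r+1)] * Pser = - D (Yd r * Pser)` -/
lemma lemA (hxy : ⁅x, y⁆ = h) (hhy : ⁅h, y⁆ = (-2 : ℂ) • y) (r : ℕ) :
    (Cx x * Yd y (r+1) - Yd y (r+1) * Cx x) * PserS h
      = -(Dser (Yd y r * PserS h)) := by
  rw [Cx_Yd x y h hxy hhy r, Dser_mul, sub_mul]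
  have hP : Hser h * PserS h = -(Dser (PserS h)) := Hser_PserS h
  rw [mul_assoc, hP, mul_neg]
  abel

end SL2Series

section Ideal

open Finset

variable {L : Type} [LieRing L] [LieAlgebra ℂ L]

def Ide (x : L) : Submodule ℂ (UC L) :=
  Submodule.span ℂ {a : UC L | ∃ (u : UC L) (p : ℕ), a = u * el p x}

lemma Ide_mul_left (x : L) (u : UC L) {v : UC L} (hv : v ∈ Ide x) : u * v ∈ Ide x := by
  refine Submodule.span_induction ?_ ?_ ?_ ?_ hv
  · rintro a ⟨w, p, rfl⟩
    exact Submodule.subset_span ⟨u * w, p, (mul_assoc _ _ _).symm⟩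
  · rw [mul_zero]; exact zero_mem _
  · intro a b _ _ ha hb; rw [mul_add]; exact add_mem ha hb
  · intro c a _ ha; rw [mul_smul_comm]; exact Submodule.smul_mem _ _ ha

def IJ (x h : L) : Submodule ℂ (UC L) :=
  Submodule.span ℂ {a : UC L | ∃ w ∈ Hsub h, ∃ p : ℕ, a = w * el p x}

lemma IJ_le_Ide (x h : L) : IJ x h ≤ Ide x := by
  rw [IJ, Submodule.span_le]
  rintro a ⟨w, _, p, rfl⟩
  exact Submodule.subset_span ⟨w, p, rfl⟩

lemma IJ_hmul (x h : L) {w v : UC L} (hw : w ∈ Hsub h) (hv : v ∈ IJ x h) :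
    w * v ∈ IJ x h := by
  refine Submodule.span_induction ?_ ?_ ?_ ?_ hv
  · rintro a ⟨w', hw', p, rfl⟩
    rw [← mul_assoc]
    exact Submodule.subset_span ⟨w * w', mul_mem hw hw', p, rfl⟩
  · rw [mul_zero]; exact zero_mem _
  · intro a b _ _ ha hb; rw [mul_add]; exact add_mem ha hb
  · intro c a _ ha; rw [mul_smul_comm]; exact Submodule.smul_mem _ _ ha

lemma x_mul_Hsub (x h : L) (hhx : ⁅h, x⁆ = (2 : ℂ) • x) {w : UC L} (hw : w ∈ Hsub h)
    (c : ℕ) : el c x * w ∈ IJ x h := by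
  revert c
  refine Algebra.adjoin_induction (hx := hw) ?_ ?_ ?_ ?_
  · rintro w ⟨q, rfl⟩ c
    have hxh : ⁅x, h⁆ = (-2 : ℂ) • x := by
      rw [← lie_skew, hhx, neg_smul]
    have hc : el c x * el (q+1) h = el (q+1) h * el c x + (-2:ℂ) • el (c+(q+1)) x := by
      rw [el_mul_el, hxh, el_smul_elem]
    rw [hc]
    refine add_mem ?_ (Submodule.smul_mem _ _ ?_)
    · exact Submodule.subset_span ⟨el (q+1) h, Algebra.subset_adjoin ⟨q, rfl⟩, c, rfl⟩
    · exact Submodule.subset_span ⟨1, one_mem _, c+(q+1), (one_mul _).symm⟩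
  · intro r c
    have he : el c x * (algebraMap ℂ (UC L)) r = r • el c x := by
      rw [← Algebra.commutes, ← Algebra.smul_def]
    rw [he]
    exact Submodule.smul_mem _ _
      (Submodule.subset_span ⟨1, one_mem _, c, (one_mul _).symm⟩)
  · intro a b _ _ ha hb c
    rw [mul_add]
    exact add_mem (ha c) (hb c)
  · intro a b _ _ ha hb c
    rw [← mul_assoc]
    have key : ∀ v ∈ IJ x h, v * b ∈ IJ x h := by
      intro v hv
      refine Submodule.span_induction ?_ ?_ ?_ ?_ hv
      · rintro a' ⟨w', hw', p, rfl⟩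
        rw [mul_assoc]
        exact IJ_hmul x h hw' (hb p)
      · rw [zero_mul]; exact zero_mem _
      · intro u1 u2 _ _ h1 h2; rw [add_mul]; exact add_mem h1 h2
      · intro c' u1 _ h1; rw [smul_mul_assoc]; exact Submodule.smul_mem _ _ h1
    exact key _ (ha c)

lemma x_mul_Pk (x h : L) (hhx : ⁅h, x⁆ = (2 : ℂ) • x) (b : ℕ) :
    el 1 x * Pk h b ∈ Ide x :=
  IJ_le_Ide x h (x_mul_Hsub x h hhx (Pk_mem h b) 1)

end Ideal

section Main

open Finset PowerSeries

variable {L : Type} [LieRing L] [LieAlgebra ℂ L]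

lemma dp_zero' (u : UC L) : dp u 0 = 1 := by simp [dp]

lemma dp_succ' (u : UC L) (m : ℕ) :
    dp u (m+1) = (((m+1 : ℕ) : ℂ))⁻¹ • (u * dp u m) := by
  rw [dp, dp, mul_smul_comm, smul_smul, ← pow_succ']
  congr 1
  rw [Nat.factorial_succ]
  push_cast
  rw [mul_inv]

lemma main_ind (x y h : L) (hxy : ⁅x, y⁆ = h) (hhx : ⁅h, x⁆ = (2 : ℂ) • x)
    (hhy : ⁅h, y⁆ = (-2 : ℂ) • y) :
    ∀ s r : ℕ, dp (el 1 x) s * dp (el 0 y) (r + s)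
      - ((-1:ℂ))^s • (PowerSeries.coeff s (Yd y r * PserS h)) ∈ Ide x := by
  intro s
  induction s with
  | zero =>
      intro r
      have h0 : PowerSeries.coeff 0 (Yd y r * PserS h) = yrs y r 0 * Pk h 0 := by
        rw [PowerSeries.coeff_mul, Finset.Nat.antidiagonal_zero, Finset.sum_singleton]
        simp only [Yd, PserS, coeff_mk]
      rw [h0, yrs_r_zero, Pk_zero, mul_one, pow_zero, one_smul, dp_zero', one_mul,
        Nat.add_zero, sub_self]
      exact zero_mem _
  | succ s ih =>
      intro r
      -- series identity
      have e2 : Cx x * (Yd y (r+1) * PserS h)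
          = Yd y (r+1) * (Cx x * PserS h) - Dser (Yd y r * PserS h) := by
        have h3 : Cx x * Yd y (r+1)
            = Yd y (r+1) * Cx x + (Cx x * Yd y (r+1) - Yd y (r+1) * Cx x) := by abel
        calc Cx x * (Yd y (r+1) * PserS h)
            = (Cx x * Yd y (r+1)) * PserS h := (mul_assoc _ _ _).symm
          _ = (Yd y (r+1) * Cx x) * PserS h
                + (Cx x * Yd y (r+1) - Yd y (r+1) * Cx x) * PserS h := by
              nth_rewrite 1 [h3]
              rw [add_mul]
          _ = Yd y (r+1) * (Cx x * PserS h) - Dser (Yd y r * PserS h) := by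
              rw [lemA x y h hxy hhy r, mul_assoc]
              abel
      have hstep : el 1 x * PowerSeries.coeff s (Yd y (r+1) * PserS h)
          = PowerSeries.coeff s (Yd y (r+1) * (Cx x * PserS h))
            - ((s+1 : ℕ) : ℂ) • PowerSeries.coeff (s+1) (Yd y r * PserS h) := by
        have h4 := congrArg (PowerSeries.coeff s) e2
        rw [map_sub, coeff_Dser, ← Nat.cast_smul_eq_nsmul ℂ] at h4
        rw [Cx, PowerSeries.coeff_C_mul] at h4
        exact h4
      -- the ideal part
      have hma : PowerSeries.coeff s (Yd y (r+1) * (Cx x * PserS h)) ∈ Ide x := by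
        rw [PowerSeries.coeff_mul]
        apply Submodule.sum_mem
        intro pq _
        have hcoeff : PowerSeries.coeff pq.2 (Cx x * PserS h) = el 1 x * Pk h pq.2 := by
          rw [Cx, PowerSeries.coeff_C_mul, PserS, coeff_mk]
        rw [hcoeff]
        exact Ide_mul_left x _ (x_mul_Pk x h hhx pq.2)
      -- induction hypothesis at r+1
      have ihh := ih (r+1)
      set A := dp (el 1 x) s * dp (el 0 y) ((r+1) + s) with hA
      set B := ((-1:ℂ))^s • (PowerSeries.coeff s (Yd y (r+1) * PserS h)) with hB
      have eq1 : dp (el 1 x) (s+1) * dp (el 0 y) (r + (s+1))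
          = (((s+1 : ℕ) : ℂ))⁻¹ • (el 1 x * A) := by
        have hnat : r + (s+1) = (r+1) + s := by omega
        rw [hnat, dp_succ', smul_mul_assoc, mul_assoc]
      have hxA : el 1 x * A
          = (-1:ℂ)^s • (PowerSeries.coeff s (Yd y (r+1) * (Cx x * PserS h)))
            - (-1:ℂ)^s • (((s+1 : ℕ) : ℂ) • PowerSeries.coeff (s+1) (Yd y r * PserS h))
            + el 1 x * (A - B) := by
        have h1 : el 1 x * A = el 1 x * B + el 1 x * (A - B) := by
          rw [← mul_add]
          congr 1
          abel
        have h2 : el 1 x * B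
            = (-1:ℂ)^s • (el 1 x * PowerSeries.coeff s (Yd y (r+1) * PserS h)) :=
          mul_smul_comm _ _ _
        rw [h1, h2, hstep, smul_sub]
      have hc0 : ((s+1 : ℕ) : ℂ) ≠ 0 := by exact_mod_cast Nat.succ_ne_zero s
      have hc1 : (1 + (s : ℂ)) ≠ 0 := by
        intro hh
        apply hc0
        push_cast
        linear_combination hh
      have key : dp (el 1 x) (s+1) * dp (el 0 y) (r + (s+1))
          - ((-1:ℂ))^(s+1) • PowerSeries.coeff (s+1) (Yd y r * PserS h)
          = (((s+1 : ℕ) : ℂ))⁻¹ •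
              ((-1:ℂ)^s • PowerSeries.coeff s (Yd y (r+1) * (Cx x * PserS h)))
            + (((s+1 : ℕ) : ℂ))⁻¹ • (el 1 x * (A - B)) := by
        rw [eq1, hxA]
        match_scalars
        · field_simp
        · linear_combination (-((-1:ℂ)^s)) * mul_inv_cancel₀ hc1
        · field_simp
      rw [key]
      refine add_mem (Submodule.smul_mem _ _ (Submodule.smul_mem _ _ hma))
        (Submodule.smul_mem _ _ ?_)
      exact Ide_mul_left x _ ihh

end Main


end GarlandProof

/-- **Garland's identity.** For an sl₂-triple `(x, y, h)` in a complex Lie algebra `L`,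
in `U(L[t])` the element
`(x⊗t)^{(s)} (y⊗1)^{(r+s)} − (−1)^s ∑_{k} y(r, s−k) P(u)_k`
lies in the left ideal `U(L[t]) · n⁺[t]`, where `n⁺[t]` is spanned by the
elements `x ⊗ t^p`. -/
theorem garland (x y h : L) (hxy : ⁅x, y⁆ = h) (hhx : ⁅h, x⁆ = (2 : ℂ) • x)
    (hhy : ⁅h, y⁆ = (-2 : ℂ) • y) (s : ℕ) (hs : 1 ≤ s) (r : ℕ) :
    dp (el 1 x) s * dp (el 0 y) (r + s)
        - (-1) ^ s * ∑ k ∈ Finset.range (s + 1), yrs y r (s - k) * Pk h k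
      ∈ Submodule.span ℂ {a : UC L | ∃ (u : UC L) (p : ℕ), a = u * el p x} := by
  have hconv : (∑ k ∈ Finset.range (s+1), yrs y r (s-k) * Pk h k)
      = PowerSeries.coeff s (Yd y r * PserS h) := by
    rw [← Finset.Nat.sum_antidiagonal_eq_sum_range_succ_mk
      (fun pq => yrs y r pq.2 * Pk h pq.1) s]
    rw [PowerSeries.coeff_mul]
    simp only [Yd, PserS, PowerSeries.coeff_mk]
    exact (sum_antidiagonal_swap' s (fun a b => yrs y r a * Pk h b)).symm
  have hneg : ((-1 : UC L))^s * (∑ k ∈ Finset.range (s+1), yrs y r (s-k) * Pk h k)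
      = ((-1:ℂ))^s • PowerSeries.coeff s (Yd y r * PserS h) := by
    rw [hconv]
    have h5 : ((-1 : UC L))^s = algebraMap ℂ (UC L) ((-1 : ℂ)^s) := by
      rw [map_pow, map_neg, map_one]
    rw [h5, ← Algebra.smul_def]
  rw [hneg]
  exact main_ind x y h hxy hhx hhy s r

end
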